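/- Hausdorff attraction to the bouquets of circles (Lemma 3.1(2)): Let g ∈ GL(3,ℝ) be a loxodromic element with positive eigenvalues λ₁ > λ₂ > λ₃ > 0 and corresponding eigenvectors v₁,v₂,v₃, acting on the flag space X, and fix a metric d on X inducing its topology. Then for every nonempty compact subset K ⊆ X such that B⁻(g) is contained in the interior of K and K is disjoint from B⁺(g), the sequence of compact sets g^{-n}(K) converges to B⁻(g) in the Hausdorff distance d_H; symmetrically, for every nonempty compact K ⊆ X with B⁺(g) ⊆ int(K) and K ∩ B⁻(g) = ∅, the sequence g^{n}(K) converges to B⁺(g) in the Hausdorff distance. -/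

import Mathlib

open Matrix Filter Topology Set

noncomputable section

/-- `V3` is `ℝ³`. -/
abbrev V3 : Type := Fin 3 → ℝ

/-- The group `GL(3,ℝ)` of invertible `3 × 3` real matrices. -/
abbrev GL3 : Type := (Matrix (Fin 3) (Fin 3) ℝ)ˣ

/-- Nonzero vectors of `ℝ³` up to a nonzero scalar. -/
def projSetoid : Setoid {v : V3 // v ≠ 0} where
  r v w := ∃ c : ℝ, c ≠ 0 ∧ w.1 = c • v.1
  iseqv := by
    refine ⟨fun v => ⟨1, one_ne_zero, (one_smul ℝ v.1).symm⟩, ?_, ?_⟩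
    · rintro v w ⟨c, hc, h⟩
      exact ⟨c⁻¹, inv_ne_zero hc, by rw [h, smul_smul, inv_mul_cancel₀ hc, one_smul]⟩
    · rintro u v w ⟨c, hc, h⟩ ⟨d, hd, h'⟩
      exact ⟨d * c, mul_ne_zero hd hc, by rw [h', h, smul_smul]⟩

/-- The real projective plane `ℝP²`, as the quotient of `ℝ³ \ {0}` by nonzero scalings,
with the quotient topology.  (We use the same model for the dual projective plane `ℝP²*`,
a class `[f₁ : f₂ : f₃]*` of linear forms being recorded through its coefficient
vector `(f₁, f₂, f₃)`; the form acts on vectors by the dot product.) -/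
def RP2 : Type := Quotient projSetoid

/-- The projective class `[v]` of a nonzero vector. -/
def RP2.mk (v : V3) (hv : v ≠ 0) : RP2 := Quotient.mk projSetoid ⟨v, hv⟩

instance : TopologicalSpace RP2 :=
  inferInstanceAs (TopologicalSpace (Quotient projSetoid))

lemma RP2.ind {P : RP2 → Prop} (h : ∀ (v : V3) (hv : v ≠ 0), P (RP2.mk v hv)) (p : RP2) : P p := by
  refine Quotient.ind (fun a => ?_) p
  exact h a.1 a.2

lemma RP2.mk_eq_mk_iff {v w : V3} {hv : v ≠ 0} {hw : w ≠ 0} :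
    RP2.mk v hv = RP2.mk w hw ↔ ∃ c : ℝ, c ≠ 0 ∧ w = c • v :=
  ⟨fun h => Quotient.exact h, fun h => Quotient.sound h⟩

lemma ne_zero_of_coord {v : V3} (i : Fin 3) (h : v i ≠ 0) : v ≠ 0 :=
  fun h0 => h (by rw [h0]; rfl)

/-- The projective class of a vector, defaulting to `[e₁]` for the zero vector. -/
def RP2.mk' (v : V3) : RP2 :=
  if h : v = 0 then RP2.mk ![1, 0, 0] (ne_zero_of_coord 0 (by simp)) else RP2.mk v h

lemma e1_ne : (![1, 0, 0] : V3) ≠ 0 := ne_zero_of_coord 0 (by norm_num)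

lemma e3_ne : (![0, 0, 1] : V3) ≠ 0 := ne_zero_of_coord 2 (by simp)

lemma GL3.mulVec_ne {g : GL3} {v : V3} (hv : v ≠ 0) :
    (g : Matrix (Fin 3) (Fin 3) ℝ) *ᵥ v ≠ 0 := by
  intro h
  apply hv
  have h2 : ((g⁻¹ : GL3) : Matrix (Fin 3) (Fin 3) ℝ) *ᵥ
      ((g : Matrix (Fin 3) (Fin 3) ℝ) *ᵥ v) = 0 := by rw [h, Matrix.mulVec_zero]
  rwa [Matrix.mulVec_mulVec, Units.inv_mul, Matrix.one_mulVec] at h2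

/-- The action of `g ∈ GL(3,ℝ)` on `ℝP²`, `g · [v] = [g v]`. -/
def RP2.mapMat (g : GL3) : RP2 → RP2 :=
  Quotient.lift
    (fun a : {v : V3 // v ≠ 0} =>
      RP2.mk ((g : Matrix (Fin 3) (Fin 3) ℝ) *ᵥ a.1) (GL3.mulVec_ne a.2))
    (by
      rintro a b ⟨c, hc, h⟩
      apply Quotient.sound
      refine ⟨c, hc, ?_⟩
      show (g : Matrix (Fin 3) (Fin 3) ℝ) *ᵥ b.1 = c • ((g : Matrix (Fin 3) (Fin 3) ℝ) *ᵥ a.1)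
      rw [h, Matrix.mulVec_smul])

lemma RP2.mapMat_mk (g : GL3) (v : V3) (hv : v ≠ 0) :
    RP2.mapMat g (RP2.mk v hv) =
      RP2.mk ((g : Matrix (Fin 3) (Fin 3) ℝ) *ᵥ v) (GL3.mulVec_ne hv) := rfl

/-- The element of `GL(3,ℝ)` acting on coefficient vectors of linear forms the way `g`
acts on `ℝP²*`:  the coefficient vector of `f ∘ g⁻¹` is `(g⁻¹)ᵀ` applied to that of `f`. -/
def dualGL (g : GL3) : GL3 where
  val := ((g⁻¹ : GL3) : Matrix (Fin 3) (Fin 3) ℝ)ᵀ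
  inv := ((g : GL3) : Matrix (Fin 3) (Fin 3) ℝ)ᵀ
  val_inv := by rw [← Matrix.transpose_mul, Units.mul_inv, Matrix.transpose_one]
  inv_val := by rw [← Matrix.transpose_mul, Units.inv_mul, Matrix.transpose_one]

/-- The flag space `X`: pairs `([v], [f]) ∈ ℝP² × ℝP²*` with `f(v) = 0`. -/
def FlagSpace : Set (RP2 × RP2) :=
  {x | ∀ (v f : V3) (hv : v ≠ 0) (hf : f ≠ 0),
    x.1 = RP2.mk v hv → x.2 = RP2.mk f hf → f ⬝ᵥ v = 0}

/-- Points of the flag space. -/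
abbrev Flag3 : Type := ↥FlagSpace

lemma mem_flagSpace_mk {v f : V3} (hv : v ≠ 0) (hf : f ≠ 0) (h : f ⬝ᵥ v = 0) :
    (RP2.mk v hv, RP2.mk f hf) ∈ FlagSpace := by
  rintro v' f' hv' hf' hp hq
  obtain ⟨c, hc, hcv⟩ := RP2.mk_eq_mk_iff.1 hp
  obtain ⟨d, hd, hdf⟩ := RP2.mk_eq_mk_iff.1 hq
  rw [hcv, hdf, smul_dotProduct, dotProduct_smul, h]
  simp

lemma dot_invariance (g : GL3) (v f : V3) :
    (((dualGL g : GL3) : Matrix (Fin 3) (Fin 3) ℝ) *ᵥ f) ⬝ᵥ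
      ((g : Matrix (Fin 3) (Fin 3) ℝ) *ᵥ v) = f ⬝ᵥ v := by
  have h1 : ((dualGL g : GL3) : Matrix (Fin 3) (Fin 3) ℝ) *ᵥ f =
      f ᵥ* ((g⁻¹ : GL3) : Matrix (Fin 3) (Fin 3) ℝ) := Matrix.mulVec_transpose _ _
  rw [h1, dotProduct_mulVec, Matrix.vecMul_vecMul, Units.inv_mul, Matrix.vecMul_one]

lemma flagPair_mem (g : GL3) {x : RP2 × RP2} (hx : x ∈ FlagSpace) :
    (RP2.mapMat g x.1, RP2.mapMat (dualGL g) x.2) ∈ FlagSpace := by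
  obtain ⟨p, q⟩ := x
  revert hx
  refine Quotient.inductionOn₂ p q ?_
  rintro ⟨v, hv⟩ ⟨f, hf⟩ hx
  have h0 : f ⬝ᵥ v = 0 := hx v f hv hf rfl rfl
  exact mem_flagSpace_mk _ _ (by rw [dot_invariance]; exact h0)

/-- The action of `g ∈ GL(3,ℝ)` on the flag space,
`g · ([v], [f]) = ([g v], [f ∘ g⁻¹])`. -/
def flagMap (g : GL3) (x : Flag3) : Flag3 :=
  ⟨(RP2.mapMat g x.1.1, RP2.mapMat (dualGL g) x.1.2), flagPair_mem g x.2⟩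

/-! ### Composition laws and continuity -/

lemma RP2.mapMat_mapMat (g h : GL3) (p : RP2) :
    RP2.mapMat g (RP2.mapMat h p) = RP2.mapMat (g * h) p := by
  refine Quotient.inductionOn p fun a => ?_
  apply Quotient.sound
  exact ⟨1, one_ne_zero, by simp [Matrix.mulVec_mulVec, Units.val_mul]⟩

lemma RP2.mapMat_one (p : RP2) : RP2.mapMat 1 p = p := by
  refine Quotient.inductionOn p fun a => ?_
  apply Quotient.sound
  exact ⟨1, one_ne_zero, by simp [Matrix.one_mulVec, Units.val_one]⟩

lemma dualGL_mul (g h : GL3) : dualGL (g * h) = dualGL g * dualGL h := by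
  apply Units.ext
  rw [Units.val_mul]
  show (((g * h)⁻¹ : GL3) : Matrix (Fin 3) (Fin 3) ℝ)ᵀ =
    ((g⁻¹ : GL3) : Matrix (Fin 3) (Fin 3) ℝ)ᵀ * ((h⁻¹ : GL3) : Matrix (Fin 3) (Fin 3) ℝ)ᵀ
  rw [_root_.mul_inv_rev, Units.val_mul, Matrix.transpose_mul]

lemma dualGL_one : dualGL (1 : GL3) = 1 := by
  apply Units.ext
  show (((1 : GL3)⁻¹ : GL3) : Matrix (Fin 3) (Fin 3) ℝ)ᵀ = ((1 : GL3) : Matrix (Fin 3) (Fin 3) ℝ)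
  rw [inv_one, Units.val_one, Matrix.transpose_one]

lemma flagMap_flagMap (g h : GL3) (x : Flag3) :
    flagMap g (flagMap h x) = flagMap (g * h) x := by
  apply Subtype.ext
  apply Prod.ext
  · exact RP2.mapMat_mapMat g h x.1.1
  · show RP2.mapMat (dualGL g) (RP2.mapMat (dualGL h) x.1.2) = RP2.mapMat (dualGL (g * h)) x.1.2
    rw [RP2.mapMat_mapMat, dualGL_mul]

lemma flagMap_one (x : Flag3) : flagMap 1 x = x := by
  apply Subtype.ext
  apply Prod.ext
  · exact RP2.mapMat_one x.1.1
  · show RP2.mapMat (dualGL 1) x.1.2 = x.1.2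
    rw [dualGL_one, RP2.mapMat_one]

lemma continuous_mulVec (M : Matrix (Fin 3) (Fin 3) ℝ) :
    Continuous fun v : V3 => M *ᵥ v := by
  have h : (fun v : V3 => M *ᵥ v) = fun v => fun i => ∑ j, M i j * v j := by
    funext v i
    simp [Matrix.mulVec, dotProduct]
  rw [h]
  exact continuous_pi fun i =>
    continuous_finset_sum _ fun j _ => continuous_const.mul (continuous_apply j)

lemma continuous_mapMat (g : GL3) : Continuous (RP2.mapMat g) := by
  apply Continuous.quotient_lift
  exact continuous_quotient_mk'.comp
    (Continuous.subtype_mk ((continuous_mulVec _).comp continuous_subtype_val) _)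

lemma continuous_flagMap (g : GL3) : Continuous (flagMap g) := by
  apply Continuous.subtype_mk
  exact ((continuous_mapMat g).comp (continuous_fst.comp continuous_subtype_val)).prodMk
    ((continuous_mapMat (dualGL g)).comp (continuous_snd.comp continuous_subtype_val))

/-- The action of `g ∈ GL(3,ℝ)` on the flag space, as a homeomorphism. -/
def flagHomeo (g : GL3) : Flag3 ≃ₜ Flag3 where
  toFun := flagMap g
  invFun := flagMap g⁻¹
  left_inv := fun x => by rw [flagMap_flagMap, inv_mul_cancel, flagMap_one]
  right_inv := fun x => by rw [flagMap_flagMap, mul_inv_cancel, flagMap_one]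
  continuous_toFun := continuous_flagMap g
  continuous_invFun := continuous_flagMap g⁻¹

/-- The group of homeomorphisms of a topological space
(with `(f * g) x = f (g x)`). -/
instance homeoGroup (Z : Type*) [TopologicalSpace Z] : Group (Z ≃ₜ Z) where
  mul f g := g.trans f
  one := Homeomorph.refl Z
  inv := Homeomorph.symm
  mul_assoc _ _ _ := Homeomorph.ext fun _ => rfl
  one_mul _ := Homeomorph.ext fun _ => rfl
  mul_one _ := Homeomorph.ext fun _ => rfl
  inv_mul_cancel f := Homeomorph.ext fun x => f.symm_apply_apply x

/-! ### Geometric objects in the flag space -/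

/-- The α-circle of a point `p ∈ ℝP²`: all flags whose point is `p`. -/
def Cα (p : RP2) : Set Flag3 := {x | x.1.1 = p}

/-- The β-circle of the projective line with defining form (class) `q`:
all flags whose plane is `ker q`. -/
def Cβ (q : RP2) : Set Flag3 := {x | x.1.2 = q}

/-- The plane of the flag `x` contains the direction of the vector `u`. -/
def planeContains (x : Flag3) (u : V3) : Prop :=
  ∀ (f : V3) (hf : f ≠ 0), x.1.2 = RP2.mk f hf → f ⬝ᵥ u = 0

/-- The point of the flag `x` lies on the projective line defined by the linear
form of coefficients `w`. -/
def pointOnForm (x : Flag3) (w : V3) : Prop :=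
  ∀ (v : V3) (hv : v ≠ 0), x.1.1 = RP2.mk v hv → w ⬝ᵥ v = 0

/-- The β-circle of the projective line spanned by the (independent) directions of
`u` and `w`: all flags whose plane contains both. -/
def CβSpan (u w : V3) : Set Flag3 := {x | planeContains x u ∧ planeContains x w}

lemma li_ne_zero_0 {v1 v2 v3 : V3} (h : LinearIndependent ℝ ![v1, v2, v3]) : v1 ≠ 0 := by
  have := h.ne_zero 0; simpa using this

lemma li_ne_zero_1 {v1 v2 v3 : V3} (h : LinearIndependent ℝ ![v1, v2, v3]) : v2 ≠ 0 := by
  have := h.ne_zero 1; simpa using this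

lemma li_ne_zero_2 {v1 v2 v3 : V3} (h : LinearIndependent ℝ ![v1, v2, v3]) : v3 ≠ 0 := by
  have := h.ne_zero 2; simpa using this

/-- The repulsive bouquet of circles `B⁻(g) = C_α([v₃]) ∪ C_β(span(v₂,v₃))` of a
loxodromic element with eigenvectors `v₁, v₂, v₃` (eigenvalues in decreasing order
of modulus). -/
def bouquetMinus (v2 v3 : V3) (h3 : v3 ≠ 0) : Set Flag3 :=
  Cα (RP2.mk v3 h3) ∪ CβSpan v2 v3

/-- The attractive bouquet of circles `B⁺(g) = C_α([v₁]) ∪ C_β(span(v₁,v₂))`. -/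
def bouquetPlus (v1 v2 : V3) (h1 : v1 ≠ 0) : Set Flag3 :=
  Cα (RP2.mk v1 h1) ∪ CβSpan v1 v2

/-- The dynamic set of a point `x` under a sequence of maps `g n`: all limits of
`g (n k) (x k)` for a strictly increasing sequence `(n k)` and a sequence `x k → x`. -/
def DynSet {M : Type*} [TopologicalSpace M] (g : ℕ → M → M) (x : M) : Set M :=
  {y | ∃ φ : ℕ → ℕ, StrictMono φ ∧ ∃ u : ℕ → M,
    Tendsto u atTop (𝓝 x) ∧ Tendsto (fun k => g (φ k) (u k)) atTop (𝓝 y)}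

end


noncomputable section Attraction
open Filter Topology

/-! ### Auxiliary real-analysis lemmas -/

/-- Helper: if `s k * (m1^{n k})⁻¹ * a k → w1 ≠ 0` and
`s k * (mj^{n k})⁻¹ * bj k → wj` with `mj < m1`, `0 < mj`, `|a| ≤ 1`,
then `bj k` is eventually `< δ` in absolute value. -/
lemma HA_small_coord (m1 mj δ : ℝ) (hδ : 0 < δ) (hmj : 0 < mj) (hj1 : mj < m1)
    (n : ℕ → ℕ) (hn : Tendsto n atTop atTop)
    (s a bj : ℕ → ℝ) (ha : ∀ k, |a k| ≤ 1)
    (w1 wj : ℝ) (hw1 : w1 ≠ 0)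
    (hE1 : Tendsto (fun k => s k * (m1 ^ n k)⁻¹ * a k) atTop (𝓝 w1))
    (hEj : Tendsto (fun k => s k * (mj ^ n k)⁻¹ * bj k) atTop (𝓝 wj)) :
    ∀ᶠ k in atTop, |bj k| < δ := by
  have hm1 : 0 < m1 := hmj.trans hj1
  have hne : ∀ᶠ k in atTop, s k * (m1 ^ n k)⁻¹ * a k ≠ 0 := hE1.eventually_ne hw1
  set G : ℕ → ℝ := fun k =>
    |(s k * (mj ^ n k)⁻¹ * bj k) / (s k * (m1 ^ n k)⁻¹ * a k)| * (mj / m1) ^ n k with hG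
  have hpow : Tendsto (fun k => (mj / m1) ^ n k) atTop (𝓝 0) := by
    have h01 : (0:ℝ) ≤ mj / m1 := le_of_lt (div_pos hmj hm1)
    have h11 : mj / m1 < 1 := (div_lt_one hm1).2 hj1
    exact (tendsto_pow_atTop_nhds_zero_of_lt_one h01 h11).comp hn
  have hGlim : Tendsto G atTop (𝓝 0) := by
    have hdiv := (hEj.div hE1 hw1).abs
    have := hdiv.mul hpow
    simpa using this
  have hGsmall : ∀ᶠ k in atTop, G k < δ := hGlim.eventually (gt_mem_nhds hδ)
  have hbound : ∀ᶠ k in atTop, |bj k| ≤ G k := by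
    filter_upwards [hne] with k hk
    have hs : s k ≠ 0 := by intro h; apply hk; rw [h]; ring
    have hak : a k ≠ 0 := by intro h; apply hk; rw [h]; ring
    have hp1 : (m1:ℝ) ^ n k ≠ 0 := pow_ne_zero _ (ne_of_gt hm1)
    have hpj : (mj:ℝ) ^ n k ≠ 0 := pow_ne_zero _ (ne_of_gt hmj)
    have key : bj k =
        ((s k * (mj ^ n k)⁻¹ * bj k) / (s k * (m1 ^ n k)⁻¹ * a k)) *
          (mj / m1) ^ n k * a k := by
      field_simp
      ring_nf
      rw [inv_pow, mul_assoc (bj k * mj ^ n k), mul_inv_cancel₀ hp1, mul_one]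
    calc |bj k| = |(s k * (mj ^ n k)⁻¹ * bj k) / (s k * (m1 ^ n k)⁻¹ * a k)| *
          |(mj / m1) ^ n k| * |a k| := by
            conv_lhs => rw [key]
            rw [abs_mul, abs_mul]
      _ ≤ |(s k * (mj ^ n k)⁻¹ * bj k) / (s k * (m1 ^ n k)⁻¹ * a k)| *
          |(mj / m1) ^ n k| * 1 := by
            apply mul_le_mul_of_nonneg_left (ha k) (by positivity)
      _ = G k := by
          rw [mul_one, hG]
          congr 1
          exact abs_of_nonneg (by positivity)
  filter_upwards [hGsmall, hbound] with k h1 h2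
  exact lt_of_le_of_lt h2 h1

/-- Core dynamical estimate: under the normalization and lower bounds,
the limit of the fastest-growing coordinate vanishes. -/
lemma HA_core_vanish (m1 m2 m3 δ : ℝ) (h12 : m2 < m1) (h23 : m3 < m2) (h3 : 0 < m3)
    (hδ : 0 < δ) (n : ℕ → ℕ) (hn : Tendsto n atTop atTop)
    (s a b c : ℕ → ℝ) (ha : ∀ k, |a k| ≤ 1)
    (hlow : ∀ k, δ ≤ max |b k| |c k|)
    (w1 w2 w3 : ℝ)
    (hE1 : Tendsto (fun k => s k * (m1 ^ n k)⁻¹ * a k) atTop (𝓝 w1))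
    (hE2 : Tendsto (fun k => s k * (m2 ^ n k)⁻¹ * b k) atTop (𝓝 w2))
    (hE3 : Tendsto (fun k => s k * (m3 ^ n k)⁻¹ * c k) atTop (𝓝 w3)) :
    w1 = 0 := by
  by_contra hw1
  have hb := HA_small_coord m1 m2 δ hδ (h3.trans h23) h12 n hn s a b ha w1 w2 hw1 hE1 hE2
  have hc := HA_small_coord m1 m3 δ hδ h3 (h23.trans h12) n hn s a c ha w1 w3 hw1 hE1 hE3
  obtain ⟨k, hbk, hck⟩ := (hb.and hc).exists
  have := hlow k
  rcases max_cases |b k| |c k| with ⟨h, _⟩ | ⟨h, _⟩ <;> rw [h] at this <;> linarith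

/-! ### Eigenvector lemmas -/

lemma HA_pow_eigen {g : GL3} {v : V3} {l : ℝ}
    (he : (g : Matrix (Fin 3) (Fin 3) ℝ) *ᵥ v = l • v) (n : ℕ) :
    ((g ^ n : GL3) : Matrix (Fin 3) (Fin 3) ℝ) *ᵥ v = l ^ n • v := by
  induction n with
  | zero => simp [Units.val_one, Matrix.one_mulVec]
  | succ n ih =>
      have h1 : ((g ^ (n+1) : GL3) : Matrix (Fin 3) (Fin 3) ℝ) =
          (g : Matrix (Fin 3) (Fin 3) ℝ) * ((g ^ n : GL3) : Matrix (Fin 3) (Fin 3) ℝ) := by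
        rw [pow_succ', Units.val_mul]
      rw [h1, ← Matrix.mulVec_mulVec, ih, Matrix.mulVec_smul, he, smul_smul, pow_succ',
        mul_comm]

lemma HA_inv_eigen {g : GL3} {v : V3} {l : ℝ} (hl : l ≠ 0)
    (he : (g : Matrix (Fin 3) (Fin 3) ℝ) *ᵥ v = l • v) :
    ((g⁻¹ : GL3) : Matrix (Fin 3) (Fin 3) ℝ) *ᵥ v = l⁻¹ • v := by
  have h := congrArg (fun w => ((g⁻¹ : GL3) : Matrix (Fin 3) (Fin 3) ℝ) *ᵥ w) he
  simp only [Matrix.mulVec_mulVec] at h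
  rw [Matrix.mulVec_smul] at h
  have h2 : (((g⁻¹ : GL3) : Matrix (Fin 3) (Fin 3) ℝ) *
      (g : Matrix (Fin 3) (Fin 3) ℝ)) *ᵥ v = v := by
    rw [Units.inv_mul, Matrix.one_mulVec]
  rw [h2] at h
  symm
  conv_lhs => rw [h]
  rw [smul_smul, inv_mul_cancel₀ hl, one_smul]

/-! ### Coordinates with respect to the eigenbasis -/

/-- The basis of eigenvectors. -/
def HA_bas {v1 v2 v3 : V3} (hli : LinearIndependent ℝ ![v1, v2, v3]) : Module.Basis (Fin 3) ℝ V3 :=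
  basisOfLinearIndependentOfCardEqFinrank hli (by simp)

lemma HA_bas_apply {v1 v2 v3 : V3} (hli : LinearIndependent ℝ ![v1, v2, v3]) (i : Fin 3) :
    HA_bas hli i = ![v1, v2, v3] i := by
  rw [HA_bas, coe_basisOfLinearIndependentOfCardEqFinrank]

/-- Coordinates of a vector in the eigenbasis. -/
def HA_chi {v1 v2 v3 : V3} (hli : LinearIndependent ℝ ![v1, v2, v3]) : V3 ≃ₗ[ℝ] V3 :=
  (HA_bas hli).equivFun

lemma HA_chi_ne {v1 v2 v3 : V3} (hli : LinearIndependent ℝ ![v1, v2, v3]) {v : V3}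
    (hv : v ≠ 0) : HA_chi hli v ≠ 0 := by
  intro h
  exact hv ((map_eq_zero_iff _ (HA_chi hli).injective).1 h)

/-- The linear map recording the values of a form on the eigenbasis. -/
def HA_psiLin (v1 v2 v3 : V3) : V3 →ₗ[ℝ] V3 where
  toFun f := fun i => f ⬝ᵥ ![v1, v2, v3] i
  map_add' x y := by funext i; simp [add_dotProduct]
  map_smul' c x := by funext i; simp [smul_dotProduct]

lemma HA_dot_expand {v1 v2 v3 : V3} (hli : LinearIndependent ℝ ![v1, v2, v3]) (f v : V3) :
    f ⬝ᵥ v = HA_chi hli v 0 * (f ⬝ᵥ v1) + HA_chi hli v 1 * (f ⬝ᵥ v2) +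
      HA_chi hli v 2 * (f ⬝ᵥ v3) := by
  conv_lhs => rw [← (HA_bas hli).sum_equivFun v, Fin.sum_univ_three]
  rw [HA_bas_apply hli 0, HA_bas_apply hli 1, HA_bas_apply hli 2]
  show f ⬝ᵥ ((HA_bas hli).equivFun v 0 • v1 + (HA_bas hli).equivFun v 1 • v2 +
    (HA_bas hli).equivFun v 2 • v3) = _
  rw [dotProduct_add, dotProduct_add, dotProduct_smul,
    dotProduct_smul, dotProduct_smul]
  rfl

lemma HA_psiLin_inj {v1 v2 v3 : V3} (hli : LinearIndependent ℝ ![v1, v2, v3]) :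
    Function.Injective (HA_psiLin v1 v2 v3) := by
  rw [← LinearMap.ker_eq_bot, LinearMap.ker_eq_bot']
  intro f hf
  have h0 : ∀ i, f ⬝ᵥ ![v1, v2, v3] i = 0 := fun i => congrFun hf i
  have hself : f ⬝ᵥ f = 0 := by
    rw [HA_dot_expand hli f f]
    have e0 := h0 0; have e1 := h0 1; have e2 := h0 2
    simp only [Matrix.cons_val_zero, Matrix.cons_val_one, Matrix.head_cons] at e0 e1 e2
    have e2' : f ⬝ᵥ v3 = 0 := by simpa using h0 2
    rw [e0, e1, e2']
    ring
  exact dotProduct_self_eq_zero.1 hself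

/-- Form coordinates, as a linear equivalence. -/
def HA_psi {v1 v2 v3 : V3} (hli : LinearIndependent ℝ ![v1, v2, v3]) : V3 ≃ₗ[ℝ] V3 :=
  LinearEquiv.ofBijective (HA_psiLin v1 v2 v3)
    ⟨HA_psiLin_inj hli, (LinearMap.injective_iff_surjective).1 (HA_psiLin_inj hli)⟩

lemma HA_psi_apply {v1 v2 v3 : V3} (hli : LinearIndependent ℝ ![v1, v2, v3]) (f : V3)
    (i : Fin 3) : HA_psi hli f i = f ⬝ᵥ ![v1, v2, v3] i := rfl

lemma HA_psi_ne {v1 v2 v3 : V3} (hli : LinearIndependent ℝ ![v1, v2, v3]) {f : V3}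
    (hf : f ≠ 0) : HA_psi hli f ≠ 0 := by
  intro h
  exact hf ((map_eq_zero_iff _ (HA_psi hli).injective).1 h)

lemma HA_chi_transform {v1 v2 v3 : V3} (hli : LinearIndependent ℝ ![v1, v2, v3])
    (M : Matrix (Fin 3) (Fin 3) ℝ) (μ : Fin 3 → ℝ)
    (hM : ∀ i, M *ᵥ ![v1, v2, v3] i = μ i • ![v1, v2, v3] i) (v : V3) (i : Fin 3) :
    HA_chi hli (M *ᵥ v) i = μ i * HA_chi hli v i := by
  have h1 : M *ᵥ v = (HA_bas hli).equivFun.symm (fun j => μ j * (HA_bas hli).equivFun v j) := by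
    rw [Module.Basis.equivFun_symm_apply]
    conv_lhs => rw [← (HA_bas hli).sum_equivFun v]
    rw [show M *ᵥ (∑ j, (HA_bas hli).equivFun v j • HA_bas hli j) =
        ∑ j, (HA_bas hli).equivFun v j • (M *ᵥ HA_bas hli j) from by
      rw [← Matrix.mulVecLin_apply, map_sum]
      simp only [_root_.map_smul, Matrix.mulVecLin_apply]]
    apply Finset.sum_congr rfl
    intro j _
    rw [HA_bas_apply hli j, hM j, smul_smul, mul_comm]
  show (HA_bas hli).equivFun (M *ᵥ v) i = _
  rw [h1, LinearEquiv.apply_symm_apply]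
  rfl

lemma HA_psi_transform {v1 v2 v3 : V3} (hli : LinearIndependent ℝ ![v1, v2, v3])
    (M : Matrix (Fin 3) (Fin 3) ℝ) (μ : Fin 3 → ℝ)
    (hM : ∀ i, M *ᵥ ![v1, v2, v3] i = μ i • ![v1, v2, v3] i) (f : V3) (i : Fin 3) :
    HA_psi hli (Mᵀ *ᵥ f) i = μ i * HA_psi hli f i := by
  rw [HA_psi_apply, HA_psi_apply, Matrix.mulVec_transpose, ← Matrix.dotProduct_mulVec,
    hM i, dotProduct_smul]
  rfl

/-! ### Normalized representatives and quotient functions -/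

lemma HA_exists_rep_norm (T : V3 ≃ₗ[ℝ] V3) (P : RP2) :
    ∃ (v : V3) (hv : v ≠ 0), P = RP2.mk v hv ∧ ‖T v‖ = 1 := by
  obtain ⟨a, ha⟩ := Quotient.exists_rep P
  have hTu : T a.1 ≠ 0 := fun h => a.2 ((map_eq_zero_iff _ T.injective).1 h)
  have hn : ‖T a.1‖ ≠ 0 := norm_ne_zero_iff.2 hTu
  refine ⟨‖T a.1‖⁻¹ • a.1, smul_ne_zero (inv_ne_zero hn) a.2, ?_, ?_⟩
  · rw [← ha]
    exact Quotient.sound ⟨‖T a.1‖⁻¹, inv_ne_zero hn, rfl⟩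
  · rw [_root_.map_smul, norm_smul, norm_inv, norm_norm, inv_mul_cancel₀ hn]

/-- The (scale-invariant) fraction of the norm of a vector carried by
coordinates `i` and `j`. -/
def HA_coordFrac (T : V3 ≃ₗ[ℝ] V3) (i j : Fin 3) : RP2 → ℝ :=
  Quotient.lift (fun a : {v : V3 // v ≠ 0} => max |T a.1 i| |T a.1 j| / ‖T a.1‖)
    (by
      rintro ⟨ua, ha⟩ ⟨ub, hb⟩ ⟨c, hc, h⟩
      have h' : ub = c • ua := h
      have key : max |T ub i| |T ub j| / ‖T ub‖ = max |T ua i| |T ua j| / ‖T ua‖ := by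
        rw [h', _root_.map_smul, norm_smul]
        have h1 : (c • T ua) i = c * T ua i := rfl
        have h2 : (c • T ua) j = c * T ua j := rfl
        rw [h1, h2, abs_mul, abs_mul, ← mul_max_of_nonneg _ _ (abs_nonneg c),
          Real.norm_eq_abs, mul_div_mul_left _ _ (abs_ne_zero.2 hc)]
      exact key.symm)

lemma HA_coordFrac_mk (T : V3 ≃ₗ[ℝ] V3) (i j : Fin 3) (v : V3) (hv : v ≠ 0) :
    HA_coordFrac T i j (RP2.mk v hv) = max |T v i| |T v j| / ‖T v‖ := rfl

lemma HA_coordFrac_continuous (T : V3 ≃ₗ[ℝ] V3) (i j : Fin 3) :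
    Continuous (HA_coordFrac T i j) := by
  apply Continuous.quotient_lift
  have hT : Continuous fun a : {v : V3 // v ≠ 0} => T a.1 :=
    (T.toLinearMap.continuous_of_finiteDimensional).comp continuous_subtype_val
  apply Continuous.div
  · exact (((continuous_apply i).comp hT).abs.max ((continuous_apply j).comp hT).abs)
  · exact hT.norm
  · intro a
    exact norm_ne_zero_iff.2 (fun h => a.2 ((map_eq_zero_iff _ T.injective).1 h))

/-! ### Convergence of flags from representatives -/

lemma HA_tendsto_mkRP2 (u : ℕ → V3) (hu : ∀ k, u k ≠ 0) (w : V3) (hw : w ≠ 0)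
    (hc : Tendsto u atTop (𝓝 w)) :
    Tendsto (fun k => RP2.mk (u k) (hu k)) atTop (𝓝 (RP2.mk w hw)) := by
  have h1 : Tendsto (fun k => (⟨u k, hu k⟩ : {v : V3 // v ≠ 0})) atTop (𝓝 ⟨w, hw⟩) := by
    rw [Topology.IsEmbedding.subtypeVal.tendsto_nhds_iff]
    exact hc
  exact (continuous_quot_mk.tendsto _).comp h1

lemma HA_tendsto_flag (z : ℕ → Flag3) (u f : ℕ → V3) (hu : ∀ k, u k ≠ 0)
    (hf : ∀ k, f k ≠ 0)
    (hz1 : ∀ k, (z k).1.1 = RP2.mk (u k) (hu k))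
    (hz2 : ∀ k, (z k).1.2 = RP2.mk (f k) (hf k))
    (w fL : V3) (hw : w ≠ 0) (hh : fL ≠ 0)
    (hcu : Tendsto u atTop (𝓝 w)) (hcf : Tendsto f atTop (𝓝 fL))
    (L : Flag3) (hL1 : L.1.1 = RP2.mk w hw) (hL2 : L.1.2 = RP2.mk fL hh) :
    Tendsto z atTop (𝓝 L) := by
  rw [Topology.IsEmbedding.subtypeVal.tendsto_nhds_iff]
  have hmk1 := HA_tendsto_mkRP2 u hu w hw hcu
  have hmk2 := HA_tendsto_mkRP2 f hf fL hh hcf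
  have hL' : (L : RP2 × RP2) = (RP2.mk w hw, RP2.mk fL hh) :=
    Prod.ext_iff.2 ⟨hL1, hL2⟩
  rw [hL']
  exact (hmk1.prodMk_nhds hmk2).congr
    (fun k => (Prod.ext_iff.2 ⟨(hz1 k).symm, (hz2 k).symm⟩))

/-! ### Invariance of the repulsive bouquet -/

lemma HA_flagMap_mem_bouquetMinus (h : GL3) (v2 v3 : V3) (hv3 : v3 ≠ 0) (c3 : ℝ)
    (hc3 : c3 ≠ 0) (hh3 : (h : Matrix (Fin 3) (Fin 3) ℝ) *ᵥ v3 = c3 • v3)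
    (d2 d3 : ℝ)
    (hd2 : ((h⁻¹ : GL3) : Matrix (Fin 3) (Fin 3) ℝ) *ᵥ v2 = d2 • v2)
    (hd3 : ((h⁻¹ : GL3) : Matrix (Fin 3) (Fin 3) ℝ) *ᵥ v3 = d3 • v3)
    {x : Flag3} (hx : x ∈ bouquetMinus v2 v3 hv3) :
    flagMap h x ∈ bouquetMinus v2 v3 hv3 := by
  rcases hx with hx | ⟨hx2, hx3⟩
  · left
    show (flagMap h x).1.1 = RP2.mk v3 hv3
    have h0 : (flagMap h x).1.1 = RP2.mapMat h x.1.1 := rfl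
    rw [h0, hx, RP2.mapMat_mk]
    exact RP2.mk_eq_mk_iff.2 ⟨c3⁻¹, inv_ne_zero hc3,
      by rw [hh3, smul_smul, inv_mul_cancel₀ hc3, one_smul]⟩
  · right
    obtain ⟨a, ha⟩ := Quotient.exists_rep x.1.2
    have hrep : x.1.2 = RP2.mk a.1 a.2 := ha.symm
    have hfv2 : a.1 ⬝ᵥ v2 = 0 := hx2 a.1 a.2 hrep
    have hfv3 : a.1 ⬝ᵥ v3 = 0 := hx3 a.1 a.2 hrep
    have hnew : (flagMap h x).1.2 =
        RP2.mk (((dualGL h : GL3) : Matrix (Fin 3) (Fin 3) ℝ) *ᵥ a.1) (GL3.mulVec_ne a.2) := by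
      show RP2.mapMat (dualGL h) x.1.2 = _
      rw [hrep, RP2.mapMat_mk]
    have hkey : ∀ (vv : V3) (dd : ℝ),
        ((h⁻¹ : GL3) : Matrix (Fin 3) (Fin 3) ℝ) *ᵥ vv = dd • vv → a.1 ⬝ᵥ vv = 0 →
        ∀ (f' : V3) (hf' : f' ≠ 0), (flagMap h x).1.2 = RP2.mk f' hf' → f' ⬝ᵥ vv = 0 := by
      intro vv dd hd hav f' hf' heq
      rw [hnew] at heq
      obtain ⟨c, hc, hcf⟩ := RP2.mk_eq_mk_iff.1 heq
      rw [hcf, smul_dotProduct]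
      have hdual : ((dualGL h : GL3) : Matrix (Fin 3) (Fin 3) ℝ) *ᵥ a.1 ⬝ᵥ vv =
          a.1 ⬝ᵥ (((h⁻¹ : GL3) : Matrix (Fin 3) (Fin 3) ℝ) *ᵥ vv) := by
        show (((h⁻¹ : GL3) : Matrix (Fin 3) (Fin 3) ℝ)ᵀ *ᵥ a.1) ⬝ᵥ vv = _
        rw [Matrix.mulVec_transpose, ← Matrix.dotProduct_mulVec]
      rw [hdual, hd, dotProduct_smul, hav]
      simp
    exact ⟨hkey v2 d2 hd2 hfv2, hkey v3 d3 hd3 hfv3⟩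


/-! ### The main attraction lemma -/

lemma HA_attract (g : GL3) (v1 v2 v3 : V3) (l1 l2 l3 : ℝ)
    (hli : LinearIndependent ℝ ![v1, v2, v3])
    (he1 : (g : Matrix (Fin 3) (Fin 3) ℝ) *ᵥ v1 = l1 • v1)
    (he2 : (g : Matrix (Fin 3) (Fin 3) ℝ) *ᵥ v2 = l2 • v2)
    (he3 : (g : Matrix (Fin 3) (Fin 3) ℝ) *ᵥ v3 = l3 • v3)
    (h12 : l2 < l1) (h23 : l3 < l2) (h3 : 0 < l3)
    (m : MetricSpace Flag3)
    (hm : m.toPseudoMetricSpace.toUniformSpace.toTopologicalSpace =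
      (inferInstance : TopologicalSpace Flag3))
    (hv1 : v1 ≠ 0) (hv3 : v3 ≠ 0)
    (K : Set Flag3) (hKne : K.Nonempty) (hKc : IsCompact K)
    (hKmem : bouquetMinus v2 v3 hv3 ⊆ K)
    (hdisj : Disjoint K (bouquetPlus v1 v2 hv1)) :
    Tendsto (fun n : ℕ => @Metric.hausdorffDist Flag3 m.toPseudoMetricSpace
      (flagMap ((g ^ n)⁻¹) '' K) (bouquetMinus v2 v3 hv3)) atTop (𝓝 0) := by
  have h2pos : 0 < l2 := h3.trans h23
  have h1pos : 0 < l1 := h2pos.trans h12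
  set Bm := bouquetMinus v2 v3 hv3 with hBmdef
  set ls : Fin 3 → ℝ := ![l1, l2, l3] with hlsdef
  have hls0 : ls 0 = l1 := rfl
  have hls1 : ls 1 = l2 := rfl
  have hls2 : ls 2 = l3 := rfl
  have hls_pos : ∀ i, 0 < ls i := by
    intro i; fin_cases i
    · exact h1pos
    · exact h2pos
    · exact h3
  have heig : ∀ i, (g : Matrix (Fin 3) (Fin 3) ℝ) *ᵥ ![v1, v2, v3] i
      = ls i • ![v1, v2, v3] i := by
    intro i; fin_cases i
    · exact he1
    · exact he2
    · exact he3
  have heig_pow : ∀ (n : ℕ) i, ((g ^ n : GL3) : Matrix (Fin 3) (Fin 3) ℝ) *ᵥ ![v1, v2, v3] i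
      = (ls i) ^ n • ![v1, v2, v3] i := fun n i => HA_pow_eigen (heig i) n
  have heig_pow_inv : ∀ (n : ℕ) i,
      (((g ^ n)⁻¹ : GL3) : Matrix (Fin 3) (Fin 3) ℝ) *ᵥ ![v1, v2, v3] i
      = ((ls i) ^ n)⁻¹ • ![v1, v2, v3] i :=
    fun n i => HA_inv_eigen (pow_ne_zero n (hls_pos i).ne') (heig_pow n i)
  set χ : V3 ≃ₗ[ℝ] V3 := HA_chi hli with hχdef
  set ψ : V3 ≃ₗ[ℝ] V3 := HA_psi hli with hψdef
  -- the lower bound δ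
  set Fp : Flag3 → ℝ := fun x => HA_coordFrac χ 1 2 x.1.1 with hFpdef
  set Ff : Flag3 → ℝ := fun x => HA_coordFrac ψ 0 1 x.1.2 with hFfdef
  have hFpcont : Continuous Fp :=
    (HA_coordFrac_continuous χ 1 2).comp (continuous_fst.comp continuous_subtype_val)
  have hFfcont : Continuous Ff :=
    (HA_coordFrac_continuous ψ 0 1).comp (continuous_snd.comp continuous_subtype_val)
  have hFppos : ∀ x ∈ K, 0 < Fp x := by
    intro x hx
    obtain ⟨v, hv, hrep, hn⟩ := HA_exists_rep_norm χ x.1.1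
    have h0 : Fp x = max |χ v 1| |χ v 2| / ‖χ v‖ := by
      show HA_coordFrac χ 1 2 (x : RP2 × RP2).1 = _
      rw [hrep]
      rfl
    rw [h0]
    apply div_pos ?_ (norm_pos_iff.2 (HA_chi_ne hli hv))
    rcases eq_or_lt_of_le (le_max_left |χ v 1| |χ v 2|) with _ | hlt
    · rcases lt_or_ge 0 (max |χ v 1| |χ v 2|) with hpos | hle
      · exact hpos
      · -- both coordinates vanish: x would be in Cα [v1] ⊆ B⁺
        exfalso
        have h1 : χ v 1 = 0 := by
          have := le_trans (le_max_left |χ v 1| |χ v 2|) hle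
          exact abs_eq_zero.1 (le_antisymm this (abs_nonneg _))
        have h2 : χ v 2 = 0 := by
          have := le_trans (le_max_right |χ v 1| |χ v 2|) hle
          exact abs_eq_zero.1 (le_antisymm this (abs_nonneg _))
        have hv0 : χ v 0 ≠ 0 := by
          intro h0'
          apply HA_chi_ne hli hv
          funext i; fin_cases i
          · exact h0'
          · exact h1
          · exact h2
        have hveq : v = χ v 0 • v1 := by
          have hsum := (HA_bas hli).sum_equivFun v
          rw [Fin.sum_univ_three, HA_bas_apply hli 0, HA_bas_apply hli 1,
            HA_bas_apply hli 2] at hsum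
          have hc1 : (HA_bas hli).equivFun v 1 = χ v 1 := rfl
          have hc2 : (HA_bas hli).equivFun v 2 = χ v 2 := rfl
          rw [hc1, hc2, h1, h2] at hsum
          simp only [zero_smul, add_zero] at hsum
          conv_lhs => rw [← hsum]
          rfl
        obtain ⟨c0, hc0ne, hveq'⟩ : ∃ c0, c0 ≠ 0 ∧ v = c0 • v1 := ⟨χ v 0, hv0, hveq⟩
        have hx1 : x.1.1 = RP2.mk v1 hv1 := by
          rw [hrep]
          exact RP2.mk_eq_mk_iff.2 ⟨c0⁻¹, inv_ne_zero hc0ne,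
            by rw [hveq', smul_smul, inv_mul_cancel₀ hc0ne, one_smul]⟩
        exact Set.disjoint_left.1 hdisj hx (Or.inl hx1)
    · exact lt_of_le_of_lt (abs_nonneg _) hlt
  have hFfpos : ∀ x ∈ K, 0 < Ff x := by
    intro x hx
    obtain ⟨f, hf, hrep, hn⟩ := HA_exists_rep_norm ψ x.1.2
    have h0 : Ff x = max |ψ f 0| |ψ f 1| / ‖ψ f‖ := by
      show HA_coordFrac ψ 0 1 (x : RP2 × RP2).2 = _
      rw [hrep]
      rfl
    rw [h0]
    apply div_pos ?_ (norm_pos_iff.2 (HA_psi_ne hli hf))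
    rcases lt_or_ge 0 (max |ψ f 0| |ψ f 1|) with hpos | hle
    · exact hpos
    · exfalso
      have h1 : ψ f 0 = 0 := by
        have := le_trans (le_max_left |ψ f 0| |ψ f 1|) hle
        exact abs_eq_zero.1 (le_antisymm this (abs_nonneg _))
      have h2 : ψ f 1 = 0 := by
        have := le_trans (le_max_right |ψ f 0| |ψ f 1|) hle
        exact abs_eq_zero.1 (le_antisymm this (abs_nonneg _))
      have hfv1 : f ⬝ᵥ v1 = 0 := h1
      have hfv2 : f ⬝ᵥ v2 = 0 := h2
      have hplane : x ∈ CβSpan v1 v2 := by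
        constructor
        · intro f' hf' heq
          rw [hrep] at heq
          obtain ⟨c, hc, hcf⟩ := RP2.mk_eq_mk_iff.1 heq
          rw [hcf, smul_dotProduct, hfv1]; simp
        · intro f' hf' heq
          rw [hrep] at heq
          obtain ⟨c, hc, hcf⟩ := RP2.mk_eq_mk_iff.1 heq
          rw [hcf, smul_dotProduct, hfv2]; simp
      exact Set.disjoint_left.1 hdisj hx (Or.inr hplane)
  obtain ⟨xp, hxpK, hxpmin⟩ := hKc.exists_isMinOn hKne hFpcont.continuousOn
  obtain ⟨xf, hxfK, hxfmin⟩ := hKc.exists_isMinOn hKne hFfcont.continuousOn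
  set δ : ℝ := min (Fp xp) (Ff xf) with hδdef
  have hδ : 0 < δ := lt_min (hFppos xp hxpK) (hFfpos xf hxfK)
  have hδp : ∀ x ∈ K, δ ≤ Fp x := fun x hx => le_trans (min_le_left _ _) (hxpmin hx)
  have hδf : ∀ x ∈ K, δ ≤ Ff x := fun x hx => le_trans (min_le_right _ _) (hxfmin hx)
  -- main claim
  have claim : ∀ ε : ℝ, 0 < ε → ∀ᶠ n in atTop, ∀ x ∈ K,
      @Metric.infDist Flag3 m.toPseudoMetricSpace (flagMap ((g ^ n)⁻¹) x) Bm ≤ ε := by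
    intro ε hε
    by_contra hcon
    rw [Filter.not_eventually] at hcon
    have hfreq : ∃ᶠ n in atTop, ∃ x ∈ K,
        ε < @Metric.infDist Flag3 m.toPseudoMetricSpace (flagMap ((g ^ n)⁻¹) x) Bm := by
      apply hcon.mono
      intro n hn
      push_neg at hn
      exact hn
    obtain ⟨φ, hφmono, hφ⟩ := extraction_of_frequently_atTop hfreq
    choose x hxK hxd using hφ
    have hnt : Tendsto φ atTop atTop := hφmono.tendsto_atTop
    choose u hu hurep hunorm using fun k => HA_exists_rep_norm χ ((x k).1.1)
    choose f hf hfrep hfnorm using fun k => HA_exists_rep_norm ψ ((x k).1.2)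
    -- transformed representatives
    set u' : ℕ → V3 := fun k => (((g ^ φ k)⁻¹ : GL3) : Matrix (Fin 3) (Fin 3) ℝ) *ᵥ u k
      with hu'def
    have hu' : ∀ k, u' k ≠ 0 := fun k => GL3.mulVec_ne (hu k)
    set f' : ℕ → V3 := fun k =>
      ((dualGL ((g ^ φ k)⁻¹) : GL3) : Matrix (Fin 3) (Fin 3) ℝ) *ᵥ f k with hf'def
    have hf' : ∀ k, f' k ≠ 0 := fun k => GL3.mulVec_ne (hf k)
    have hdualmat : ∀ k, ((dualGL ((g ^ φ k)⁻¹) : GL3) : Matrix (Fin 3) (Fin 3) ℝ)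
        = (((g ^ φ k : GL3)) : Matrix (Fin 3) (Fin 3) ℝ)ᵀ := by
      intro k
      show ((((g ^ φ k)⁻¹)⁻¹ : GL3) : Matrix (Fin 3) (Fin 3) ℝ)ᵀ = _
      rw [inv_inv]
    set σ : ℕ → ℝ := fun k => ‖χ (u' k)‖⁻¹ with hσdef
    set τ : ℕ → ℝ := fun k => ‖ψ (f' k)‖⁻¹ with hτdef
    have hσpos : ∀ k, 0 < σ k :=
      fun k => inv_pos.2 (norm_pos_iff.2 (HA_chi_ne hli (hu' k)))
    have hτpos : ∀ k, 0 < τ k :=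
      fun k => inv_pos.2 (norm_pos_iff.2 (HA_psi_ne hli (hf' k)))
    set uH : ℕ → V3 := fun k => σ k • u' k with huHdef
    set fH : ℕ → V3 := fun k => τ k • f' k with hfHdef
    have huH : ∀ k, uH k ≠ 0 := fun k => smul_ne_zero (hσpos k).ne' (hu' k)
    have hfH : ∀ k, fH k ≠ 0 := fun k => smul_ne_zero (hτpos k).ne' (hf' k)
    have huHnorm : ∀ k, ‖χ (uH k)‖ = 1 := by
      intro k
      show ‖χ (σ k • u' k)‖ = 1
      rw [_root_.map_smul, norm_smul, Real.norm_eq_abs, abs_of_pos (hσpos k)]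
      exact inv_mul_cancel₀ (norm_pos_iff.2 (HA_chi_ne hli (hu' k))).ne'
    have hfHnorm : ∀ k, ‖ψ (fH k)‖ = 1 := by
      intro k
      show ‖ψ (τ k • f' k)‖ = 1
      rw [_root_.map_smul, norm_smul, Real.norm_eq_abs, abs_of_pos (hτpos k)]
      exact inv_mul_cancel₀ (norm_pos_iff.2 (HA_psi_ne hli (hf' k))).ne'
    -- the transformed flags
    set z : ℕ → Flag3 := fun k => flagMap ((g ^ φ k)⁻¹) (x k) with hzdef
    have hz1 : ∀ k, (z k).1.1 = RP2.mk (uH k) (huH k) := by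
      intro k
      have h0 : (z k).1.1 = RP2.mapMat ((g ^ φ k)⁻¹) ((x k).1.1) := rfl
      rw [h0, hurep k, RP2.mapMat_mk]
      exact RP2.mk_eq_mk_iff.2 ⟨σ k, (hσpos k).ne', rfl⟩
    have hz2 : ∀ k, (z k).1.2 = RP2.mk (fH k) (hfH k) := by
      intro k
      have h0 : (z k).1.2 = RP2.mapMat (dualGL ((g ^ φ k)⁻¹)) ((x k).1.2) := rfl
      rw [h0, hfrep k, RP2.mapMat_mk]
      exact RP2.mk_eq_mk_iff.2 ⟨τ k, (hτpos k).ne', rfl⟩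
    have hflag0 : ∀ k, fH k ⬝ᵥ uH k = 0 :=
      fun k => (z k).2 (uH k) (fH k) (huH k) (hfH k) (hz1 k) (hz2 k)
    -- coordinates of the transformed representatives
    have hcoordu : ∀ k i, χ (uH k) i = σ k * ((ls i) ^ φ k)⁻¹ * χ (u k) i := by
      intro k i
      show χ (σ k • u' k) i = _
      rw [_root_.map_smul]
      have h0 : (σ k • χ (u' k)) i = σ k * χ (u' k) i := rfl
      rw [h0, HA_chi_transform hli _ (fun i => ((ls i) ^ φ k)⁻¹) (heig_pow_inv (φ k)) (u k) i]
      ring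
    have hcoordf : ∀ k i, ψ (fH k) i = τ k * (ls i) ^ φ k * ψ (f k) i := by
      intro k i
      show ψ (τ k • f' k) i = _
      rw [_root_.map_smul]
      have h0 : (τ k • ψ (f' k)) i = τ k * ψ (f' k) i := rfl
      rw [h0]
      have h1 : ψ (f' k) i = (ls i) ^ φ k * ψ (f k) i := by
        have := HA_psi_transform hli ((g ^ φ k : GL3) : Matrix (Fin 3) (Fin 3) ℝ)
          (fun i => (ls i) ^ φ k) (heig_pow (φ k)) (f k) i
        rw [hf'def]
        simp only [hdualmat k]
        exact this
      rw [h1]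
      ring
    -- bounds
    have hub : ∀ k i, |χ (u k) i| ≤ 1 := by
      intro k i
      have := norm_le_pi_norm (χ (u k)) i
      rwa [Real.norm_eq_abs, hunorm k] at this
    have hfb : ∀ k i, |ψ (f k) i| ≤ 1 := by
      intro k i
      have := norm_le_pi_norm (ψ (f k)) i
      rwa [Real.norm_eq_abs, hfnorm k] at this
    have hlowp : ∀ k, δ ≤ max |χ (u k) 1| |χ (u k) 2| := by
      intro k
      have h0 := hδp (x k) (hxK k)
      have h1 : Fp (x k) = max |χ (u k) 1| |χ (u k) 2| / ‖χ (u k)‖ := by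
        show HA_coordFrac χ 1 2 ((x k : Flag3) : RP2 × RP2).1 = _
        rw [hurep k]
        rfl
      rwa [h1, hunorm k, div_one] at h0
    have hlowf : ∀ k, δ ≤ max |ψ (f k) 0| |ψ (f k) 1| := by
      intro k
      have h0 := hδf (x k) (hxK k)
      have h1 : Ff (x k) = max |ψ (f k) 0| |ψ (f k) 1| / ‖ψ (f k)‖ := by
        show HA_coordFrac ψ 0 1 ((x k : Flag3) : RP2 × RP2).2 = _
        rw [hfrep k]
        rfl
      rwa [h1, hfnorm k, div_one] at h0
    -- extraction of a convergent subsequence of normalized coordinates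
    set y : ℕ → V3 × V3 := fun k => (χ (uH k), ψ (fH k)) with hydef
    have hy : ∀ k, y k ∈ (Metric.sphere (0:V3) 1) ×ˢ (Metric.sphere (0:V3) 1) := by
      intro k
      constructor
      · exact mem_sphere_zero_iff_norm.2 (huHnorm k)
      · exact mem_sphere_zero_iff_norm.2 (hfHnorm k)
    obtain ⟨wh, hwhmem, ρ, hρ, hyconv⟩ :=
      ((isCompact_sphere (0:V3) 1).prod (isCompact_sphere (0:V3) 1)).tendsto_subseq hy
    set wW := wh.1 with hwWdef
    set hW := wh.2 with hhWdef
    have hwWnorm : ‖wW‖ = 1 := mem_sphere_zero_iff_norm.1 hwhmem.1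
    have hhWnorm : ‖hW‖ = 1 := mem_sphere_zero_iff_norm.1 hwhmem.2
    have hwWne : wW ≠ 0 := fun h => by rw [h] at hwWnorm; simp at hwWnorm
    have hhWne : hW ≠ 0 := fun h => by rw [h] at hhWnorm; simp at hhWnorm
    have hconv1 : Tendsto (fun j => χ (uH (ρ j))) atTop (𝓝 wW) := by
      have := (continuous_fst.tendsto wh).comp hyconv
      exact this
    have hconv2 : Tendsto (fun j => ψ (fH (ρ j))) atTop (𝓝 hW) := by
      have := (continuous_snd.tendsto wh).comp hyconv
      exact this
    have hnρ : Tendsto (fun j => φ (ρ j)) atTop atTop := hnt.comp hρ.tendsto_atTop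
    -- core estimates
    have hwW0 : wW 0 = 0 := by
      apply HA_core_vanish (ls 0) (ls 1) (ls 2) δ h12 h23 h3 hδ (fun j => φ (ρ j)) hnρ
        (fun j => σ (ρ j)) (fun j => χ (u (ρ j)) 0) (fun j => χ (u (ρ j)) 1)
        (fun j => χ (u (ρ j)) 2) (fun j => hub (ρ j) 0) (fun j => hlowp (ρ j))
        (wW 0) (wW 1) (wW 2)
      · exact (tendsto_pi_nhds.1 hconv1 0).congr (fun j => hcoordu (ρ j) 0)
      · exact (tendsto_pi_nhds.1 hconv1 1).congr (fun j => hcoordu (ρ j) 1)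
      · exact (tendsto_pi_nhds.1 hconv1 2).congr (fun j => hcoordu (ρ j) 2)
    have hhW2 : hW 2 = 0 := by
      have hinv12 : (ls 1)⁻¹ < (ls 2)⁻¹ := by
        rw [hls1, hls2]; exact inv_strictAnti₀ h3 h23
      have hinv01 : (ls 0)⁻¹ < (ls 1)⁻¹ := by
        rw [hls0, hls1]; exact inv_strictAnti₀ h2pos h12
      have hinv0pos : 0 < (ls 0)⁻¹ := by rw [hls0]; exact inv_pos.2 h1pos
      apply HA_core_vanish ((ls 2)⁻¹) ((ls 1)⁻¹) ((ls 0)⁻¹) δ hinv12 hinv01 hinv0pos hδ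
        (fun j => φ (ρ j)) hnρ (fun j => τ (ρ j)) (fun j => ψ (f (ρ j)) 2)
        (fun j => ψ (f (ρ j)) 1) (fun j => ψ (f (ρ j)) 0) (fun j => hfb (ρ j) 2)
        (fun j => by rw [max_comm]; exact hlowf (ρ j)) (hW 2) (hW 1) (hW 0)
      · refine (tendsto_pi_nhds.1 hconv2 2).congr (fun j => ?_)
        rw [hcoordf (ρ j) 2, inv_pow, inv_inv]
      · refine (tendsto_pi_nhds.1 hconv2 1).congr (fun j => ?_)
        rw [hcoordf (ρ j) 1, inv_pow, inv_inv]
      · refine (tendsto_pi_nhds.1 hconv2 0).congr (fun j => ?_)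
        rw [hcoordf (ρ j) 0, inv_pow, inv_inv]
    -- the limit flag
    set wL : V3 := χ.symm wW with hwLdef
    set fL : V3 := ψ.symm hW with hfLdef
    have hwLne : wL ≠ 0 := by
      intro h
      apply hwWne
      have := congrArg χ h
      rwa [LinearEquiv.apply_symm_apply, map_zero] at this
    have hfLne : fL ≠ 0 := by
      intro h
      apply hhWne
      have := congrArg ψ h
      rwa [LinearEquiv.apply_symm_apply, map_zero] at this
    have hχwL : χ wL = wW := LinearEquiv.apply_symm_apply χ wW
    have hψfL : ψ fL = hW := LinearEquiv.apply_symm_apply ψ hW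
    have hconvu : Tendsto (fun j => uH (ρ j)) atTop (𝓝 wL) := by
      have hcont : Continuous (χ.symm : V3 → V3) :=
        χ.symm.toLinearMap.continuous_of_finiteDimensional
      have := (hcont.tendsto wW).comp hconv1
      exact this.congr (fun j => LinearEquiv.symm_apply_apply χ (uH (ρ j)))
    have hconvf : Tendsto (fun j => fH (ρ j)) atTop (𝓝 fL) := by
      have hcont : Continuous (ψ.symm : V3 → V3) :=
        ψ.symm.toLinearMap.continuous_of_finiteDimensional
      have := (hcont.tendsto hW).comp hconv2
      exact this.congr (fun j => LinearEquiv.symm_apply_apply ψ (fH (ρ j)))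
    have hdot0 : fL ⬝ᵥ wL = 0 := by
      have hdt : Tendsto (fun j => fH (ρ j) ⬝ᵥ uH (ρ j)) atTop (𝓝 (fL ⬝ᵥ wL)) := by
        have hform : ∀ (w z : V3), w ⬝ᵥ z = ∑ i, w i * z i := fun _ _ => rfl
        simp only [hform]
        exact tendsto_finset_sum _ fun i _ =>
          (tendsto_pi_nhds.1 hconvf i).mul (tendsto_pi_nhds.1 hconvu i)
      have hz0 : Tendsto (fun j => fH (ρ j) ⬝ᵥ uH (ρ j)) atTop (𝓝 0) :=
        tendsto_const_nhds.congr (fun j => (hflag0 (ρ j)).symm)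
      exact tendsto_nhds_unique hdt hz0
    set zL : Flag3 := ⟨(RP2.mk wL hwLne, RP2.mk fL hfLne),
      mem_flagSpace_mk hwLne hfLne hdot0⟩ with hzLdef
    -- zL belongs to the repulsive bouquet
    have hsum : hW 0 * wW 0 + hW 1 * wW 1 + hW 2 * wW 2 = 0 := by
      have hexp := HA_dot_expand hli fL wL
      have e0 : fL ⬝ᵥ v1 = ψ fL 0 := rfl
      have e1 : fL ⬝ᵥ v2 = ψ fL 1 := rfl
      have e2 : fL ⬝ᵥ v3 = ψ fL 2 := rfl
      have ec : ∀ i, HA_chi hli wL i = wW i := fun i => congrFun hχwL i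
      rw [e0, e1, e2, hψfL, ec 0, ec 1, ec 2, hdot0] at hexp
      linarith [hexp]
    have hmul : hW 1 * wW 1 = 0 := by
      rw [hwW0, hhW2] at hsum
      linarith
    have hzLB : zL ∈ Bm := by
      rcases mul_eq_zero.1 hmul with h10 | w10
      · -- plane spanned by v2 v3
        right
        have hψ1 : fL ⬝ᵥ v2 = 0 := by
          have : ψ fL 1 = hW 1 := congrFun hψfL 1
          rw [show fL ⬝ᵥ v2 = ψ fL 1 from rfl, this, h10]
        have hψ2 : fL ⬝ᵥ v3 = 0 := by
          have : ψ fL 2 = hW 2 := congrFun hψfL 2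
          rw [show fL ⬝ᵥ v3 = ψ fL 2 from rfl, this, hhW2]
        constructor
        · intro f'' hf'' heq
          obtain ⟨c, hc, hcf⟩ := RP2.mk_eq_mk_iff.1 heq
          rw [hcf, smul_dotProduct, hψ1]; simp
        · intro f'' hf'' heq
          obtain ⟨c, hc, hcf⟩ := RP2.mk_eq_mk_iff.1 heq
          rw [hcf, smul_dotProduct, hψ2]; simp
      · -- point [v3]
        left
        show zL.1.1 = RP2.mk v3 hv3
        have hwW2 : wW 2 ≠ 0 := by
          intro h2'
          apply hwWne
          funext i; fin_cases i
          · exact hwW0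
          · exact w10
          · exact h2'
        apply RP2.mk_eq_mk_iff.2
        have hwLeq : wL = wW 2 • v3 := by
          have hsymm : χ.symm wW = ∑ i, wW i • HA_bas hli i :=
            (HA_bas hli).equivFun_symm_apply wW
          rw [hwLdef, hsymm, Fin.sum_univ_three, HA_bas_apply hli 0, HA_bas_apply hli 1,
            HA_bas_apply hli 2, hwW0, w10]
          simp
        exact ⟨(wW 2)⁻¹, inv_ne_zero hwW2,
          by rw [hwLeq, smul_smul, inv_mul_cancel₀ hwW2, one_smul]⟩
    -- convergence of the transformed flags and contradiction
    have hzconv : Tendsto (fun j => z (ρ j)) atTop (𝓝 zL) :=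
      HA_tendsto_flag (fun j => z (ρ j)) (fun j => uH (ρ j)) (fun j => fH (ρ j))
        (fun j => huH (ρ j)) (fun j => hfH (ρ j)) (fun j => hz1 (ρ j)) (fun j => hz2 (ρ j))
        wL fL hwLne hfLne hconvu hconvf zL rfl rfl
    have hzconv' : @Tendsto _ _ (fun j => z (ρ j)) atTop
        (@nhds _ m.toPseudoMetricSpace.toUniformSpace.toTopologicalSpace zL) := by
      rw [hm]
      exact hzconv
    have hdist := (@tendsto_iff_dist_tendsto_zero Flag3 ℕ m.toPseudoMetricSpace _ _ _).1 hzconv'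
    obtain ⟨j, hj⟩ := (hdist.eventually (gt_mem_nhds hε)).exists
    have hle : @Metric.infDist Flag3 m.toPseudoMetricSpace (z (ρ j)) Bm ≤
        @dist _ m.toPseudoMetricSpace.toDist (z (ρ j)) zL :=
      @Metric.infDist_le_dist_of_mem Flag3 m.toPseudoMetricSpace _ _ _ hzLB
    have hgt := hxd (ρ j)
    have hzeq : z (ρ j) = flagMap ((g ^ φ (ρ j))⁻¹) (x (ρ j)) := rfl
    rw [← hzeq] at hgt
    linarith
  -- conclude the Hausdorff convergence
  rw [Metric.tendsto_atTop]
  intro ε hε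
  obtain ⟨N, hN⟩ := eventually_atTop.1 (claim (ε/2) (by linarith))
  refine ⟨N, fun n hn => ?_⟩
  have hH : @Metric.hausdorffDist Flag3 m.toPseudoMetricSpace
      (flagMap ((g ^ n)⁻¹) '' K) Bm ≤ ε/2 := by
    apply @Metric.hausdorffDist_le_of_infDist Flag3 m.toPseudoMetricSpace _ _ _ (by linarith)
    · rintro x' ⟨x₀, hx₀, rfl⟩
      exact hN n hn x₀ hx₀
    · intro y hy
      have h2pos' : l2 ≠ 0 := h2pos.ne'
      have hyK : y ∈ flagMap ((g ^ n)⁻¹) '' K := by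
        refine ⟨flagMap (g ^ n) y, hKmem ?_, ?_⟩
        · exact HA_flagMap_mem_bouquetMinus (g ^ n) v2 v3 hv3 (l3 ^ n)
            (pow_ne_zero n h3.ne') (HA_pow_eigen he3 n) ((l2 ^ n)⁻¹) ((l3 ^ n)⁻¹)
            (HA_inv_eigen (pow_ne_zero n h2pos.ne') (HA_pow_eigen he2 n))
            (HA_inv_eigen (pow_ne_zero n h3.ne') (HA_pow_eigen he3 n)) hy
        · rw [flagMap_flagMap, inv_mul_cancel, flagMap_one]
      rw [@Metric.infDist_zero_of_mem Flag3 m.toPseudoMetricSpace _ _ hyK]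
      linarith
  have hnonneg : 0 ≤ @Metric.hausdorffDist Flag3 m.toPseudoMetricSpace
      (flagMap ((g ^ n)⁻¹) '' K) Bm := @Metric.hausdorffDist_nonneg Flag3 m.toPseudoMetricSpace _ _
  rw [Real.dist_eq, sub_zero, abs_of_nonneg hnonneg]
  linarith

end Attraction


/-- Lemma 3.1(2): Hausdorff attraction of compact neighbourhoods to the repulsive
and attractive bouquets of circles of a loxodromic element with positive eigenvalues,
for any metric on the flag space inducing its topology. -/
theorem hausdorff_attraction_to_bouquets
    (g : GL3) (v1 v2 v3 : V3) (l1 l2 l3 : ℝ)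
    (hli : LinearIndependent ℝ ![v1, v2, v3])
    (he1 : (g : Matrix (Fin 3) (Fin 3) ℝ) *ᵥ v1 = l1 • v1)
    (he2 : (g : Matrix (Fin 3) (Fin 3) ℝ) *ᵥ v2 = l2 • v2)
    (he3 : (g : Matrix (Fin 3) (Fin 3) ℝ) *ᵥ v3 = l3 • v3)
    (hord : l1 > l2 ∧ l2 > l3 ∧ l3 > 0)
    (m : MetricSpace Flag3)
    (hm : m.toPseudoMetricSpace.toUniformSpace.toTopologicalSpace =
      (inferInstance : TopologicalSpace Flag3)) :
    (∀ K : Set Flag3, K.Nonempty → IsCompact K →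
      bouquetMinus v2 v3 (li_ne_zero_2 hli) ⊆ interior K →
      Disjoint K (bouquetPlus v1 v2 (li_ne_zero_0 hli)) →
      Filter.Tendsto
        (fun n : ℕ => @Metric.hausdorffDist Flag3 m.toPseudoMetricSpace
          (flagMap ((g ^ n)⁻¹) '' K) (bouquetMinus v2 v3 (li_ne_zero_2 hli)))
        Filter.atTop (nhds 0)) ∧
    (∀ K : Set Flag3, K.Nonempty → IsCompact K →
      bouquetPlus v1 v2 (li_ne_zero_0 hli) ⊆ interior K →
      Disjoint K (bouquetMinus v2 v3 (li_ne_zero_2 hli)) →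
      Filter.Tendsto
        (fun n : ℕ => @Metric.hausdorffDist Flag3 m.toPseudoMetricSpace
          (flagMap (g ^ n) '' K) (bouquetPlus v1 v2 (li_ne_zero_0 hli)))
        Filter.atTop (nhds 0)) := by
  obtain ⟨h12, h23, h3⟩ := hord
  constructor
  · intro K hKne hKc hKint hKdisj
    exact HA_attract g v1 v2 v3 l1 l2 l3 hli he1 he2 he3 h12 h23 h3 m hm
      (li_ne_zero_0 hli) (li_ne_zero_2 hli) K hKne hKc
      (hKint.trans interior_subset) hKdisj
  · intro K hKne hKc hKint hKdisj
    have h2pos : 0 < l2 := by linarith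
    have h1pos : 0 < l1 := by linarith
    have hperm : ![v3, v2, v1] = ![v1, v2, v3] ∘ (![2, 1, 0] : Fin 3 → Fin 3) := by
      funext i; fin_cases i <;> rfl
    have hinj : Function.Injective (![2, 1, 0] : Fin 3 → Fin 3) := by decide
    have hli' : LinearIndependent ℝ ![v3, v2, v1] := by
      rw [hperm]; exact hli.comp _ hinj
    have he1' : ((g⁻¹ : GL3) : Matrix (Fin 3) (Fin 3) ℝ) *ᵥ v1 = l1⁻¹ • v1 :=
      HA_inv_eigen h1pos.ne' he1
    have he2' : ((g⁻¹ : GL3) : Matrix (Fin 3) (Fin 3) ℝ) *ᵥ v2 = l2⁻¹ • v2 :=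
      HA_inv_eigen h2pos.ne' he2
    have he3' : ((g⁻¹ : GL3) : Matrix (Fin 3) (Fin 3) ℝ) *ᵥ v3 = l3⁻¹ • v3 :=
      HA_inv_eigen h3.ne' he3
    have hi12 : l2⁻¹ < l3⁻¹ := inv_strictAnti₀ h3 h23
    have hi23 : l1⁻¹ < l2⁻¹ := inv_strictAnti₀ h2pos h12
    have hi3 : 0 < l1⁻¹ := inv_pos.2 h1pos
    have hBP : bouquetMinus v2 v1 (li_ne_zero_0 hli) = bouquetPlus v1 v2 (li_ne_zero_0 hli) := by
      have hcb : CβSpan v2 v1 = CβSpan v1 v2 := Set.ext fun x => and_comm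
      rw [bouquetMinus, bouquetPlus, hcb]
    have hBM : bouquetPlus v3 v2 (li_ne_zero_2 hli) = bouquetMinus v2 v3 (li_ne_zero_2 hli) := by
      have hcb : CβSpan v3 v2 = CβSpan v2 v3 := Set.ext fun x => and_comm
      rw [bouquetMinus, bouquetPlus, hcb]
    have hmain := HA_attract g⁻¹ v3 v2 v1 l3⁻¹ l2⁻¹ l1⁻¹ hli' he3' he2' he1' hi12 hi23 hi3 m hm
      (li_ne_zero_2 hli) (li_ne_zero_0 hli) K hKne hKc
      (by rw [hBP]; exact hKint.trans interior_subset)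
      (by rw [hBM]; exact hKdisj)
    have hfun : ∀ n : ℕ, ((g⁻¹) ^ n)⁻¹ = g ^ n := fun n => by rw [inv_pow, inv_inv]
    exact hmain.congr (fun n => by rw [hfun n, hBP])
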